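/- arXiv:math/0510493 — 5 statements merged into one kernel-verified Lean document; each statement's English description precedes it below -/
import Mathlib

section
/- Solution of the Sachs equations: let I ⊆ ℝ be an open interval with 0 ∈ I, let ρ, σ : I → ℂ be differentiable and satisfy ρ'(r) = ρ(r)² + σ(r)·conj(σ(r)) and σ'(r) = (ρ(r) + conj(ρ(r)))·σ(r) for all r ∈ I. Set ρ₀ = ρ(0), σ₀ = σ(0), θ₀ = Re ρ₀, and D(r) = 1 − 2θ₀r + (ρ₀·conj(ρ₀) − σ₀·conj(σ₀))·r². If D(r) ≠ 0 for all r ∈ I, then for all r ∈ I: ρ(r) = (ρ₀ − (ρ₀·conj(ρ₀) − σ₀·conj(σ₀))·r)/D(r) and σ(r) = σ₀/D(r). -/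
open Complex ComplexConjugate

lemma sachs_lip (R : ℝ) (hR : 0 ≤ R) :
    LipschitzOnWith (4*R).toNNReal
      (fun p : ℂ × ℂ => (p.1^2 + p.2 * conj p.2, (p.1 + conj p.1) * p.2))
      (Metric.closedBall (0 : ℂ × ℂ) R) := by
  apply LipschitzOnWith.of_dist_le_mul
  rintro p hp q hq
  rw [Metric.mem_closedBall, dist_zero_right] at hp hq
  have hp1 : ‖p.1‖ ≤ R := le_trans (norm_fst_le p) hp
  have hp2 : ‖p.2‖ ≤ R := le_trans (norm_snd_le p) hp
  have hq1 : ‖q.1‖ ≤ R := le_trans (norm_fst_le q) hq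
  have hq2 : ‖q.2‖ ≤ R := le_trans (norm_snd_le q) hq
  have hd1 : ‖p.1 - q.1‖ ≤ dist p q := by
    rw [← dist_eq_norm, Prod.dist_eq]; exact le_max_left _ _
  have hd2 : ‖p.2 - q.2‖ ≤ dist p q := by
    rw [← dist_eq_norm, Prod.dist_eq]; exact le_max_right _ _
  have hdnn : 0 ≤ dist p q := dist_nonneg
  have e1 : ‖(p.1+q.1)*(p.1-q.1)‖ ≤ (R+R)*dist p q := by
    rw [norm_mul]
    exact mul_le_mul ((norm_add_le _ _).trans (by linarith)) hd1 (norm_nonneg _) (by positivity)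
  have e2 : ‖p.2*(conj p.2 - conj q.2)‖ ≤ R*dist p q := by
    rw [norm_mul, ← map_sub, RCLike.norm_conj]
    exact mul_le_mul hp2 hd2 (norm_nonneg _) hR
  have e3 : ‖(p.2-q.2)*conj q.2‖ ≤ dist p q * R := by
    rw [norm_mul, RCLike.norm_conj]
    exact mul_le_mul hd2 hq2 (norm_nonneg _) hdnn
  have e4 : ‖(p.1+conj p.1)*(p.2-q.2)‖ ≤ (R+R)*dist p q := by
    rw [norm_mul]
    refine mul_le_mul ((norm_add_le _ _).trans ?_) hd2 (norm_nonneg _) (by positivity)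
    rw [RCLike.norm_conj]; linarith
  have e5 : ‖((p.1-q.1)+(conj p.1 - conj q.1))*q.2‖ ≤ (dist p q + dist p q)*R := by
    rw [norm_mul]
    refine mul_le_mul ((norm_add_le _ _).trans ?_) hq2 (norm_nonneg _) (by positivity)
    rw [← map_sub, RCLike.norm_conj]; linarith
  rw [Real.coe_toNNReal _ (by positivity), Prod.dist_eq]
  apply max_le
  · calc dist (p.1^2 + p.2*conj p.2) (q.1^2 + q.2*conj q.2)
        = ‖(p.1+q.1)*(p.1-q.1) + (p.2*(conj p.2 - conj q.2) + (p.2-q.2)*conj q.2)‖ := by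
          rw [dist_eq_norm]; ring_nf
    _ ≤ ‖(p.1+q.1)*(p.1-q.1)‖ + (‖p.2*(conj p.2 - conj q.2)‖ + ‖(p.2-q.2)*conj q.2‖) :=
          (norm_add_le _ _).trans (by gcongr; exact norm_add_le _ _)
    _ ≤ 4*R*dist p q := by nlinarith
  · calc dist ((p.1+conj p.1)*p.2) ((q.1+conj q.1)*q.2)
        = ‖(p.1+conj p.1)*(p.2-q.2) + ((p.1-q.1)+(conj p.1 - conj q.1))*q.2‖ := by
          rw [dist_eq_norm]; ring_nf
    _ ≤ ‖(p.1+conj p.1)*(p.2-q.2)‖ + ‖((p.1-q.1)+(conj p.1 - conj q.1))*q.2‖ := norm_add_le _ _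
    _ ≤ 4*R*dist p q := by nlinarith

/-- Solution of the Sachs equations: on an open interval `(a,b)` containing `0`, if
`ρ` and `σ` satisfy `ρ' = ρ² + σ·conj σ` and `σ' = (ρ + conj ρ)·σ`, and the quadratic
`D(r) = 1 − 2θ₀r + (ρ₀·conj ρ₀ − σ₀·conj σ₀)r²` (with `ρ₀ = ρ(0)`, `σ₀ = σ(0)`,
`θ₀ = Re ρ₀`) does not vanish on `(a,b)`, then
`ρ(r) = (ρ₀ − (ρ₀·conj ρ₀ − σ₀·conj σ₀)r)/D(r)` and `σ(r) = σ₀/D(r)` on `(a,b)`. -/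
theorem sachs_solution (a b : ℝ) (ha : a < 0) (hb : 0 < b)
    (ρ σ : ℝ → ℂ)
    (hρ : ∀ r ∈ Set.Ioo a b, HasDerivAt ρ (ρ r ^ 2 + σ r * conj (σ r)) r)
    (hσ : ∀ r ∈ Set.Ioo a b, HasDerivAt σ ((ρ r + conj (ρ r)) * σ r) r)
    (D : ℝ → ℂ)
    (hD : ∀ r : ℝ, D r = 1 - 2 * ((ρ 0).re : ℂ) * (r : ℂ)
        + (ρ 0 * conj (ρ 0) - σ 0 * conj (σ 0)) * (r : ℂ) ^ 2)
    (hDne : ∀ r ∈ Set.Ioo a b, D r ≠ 0) :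
    ∀ r ∈ Set.Ioo a b,
      ρ r = (ρ 0 - (ρ 0 * conj (ρ 0) - σ 0 * conj (σ 0)) * (r : ℂ)) / D r ∧
      σ r = σ 0 / D r := by
  set P := ρ 0 with hP
  set S := σ 0 with hS
  set Kc := P * conj P - S * conj S with hKc
  have hKconj : conj Kc = Kc := by
    simp only [hKc, map_sub, map_mul, Complex.conj_conj]; ring
  set E : ℝ → ℂ := fun t => 1 - (P + conj P) * (t:ℂ) + Kc * (t:ℂ)^2 with hEdef
  have hE : ∀ t : ℝ, D t = E t := by
    intro t
    rw [hD t, hEdef, Complex.add_conj]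
    push_cast
    ring
  have hEconj : ∀ t : ℝ, conj (E t) = E t := by
    intro t
    simp only [hEdef, map_add, map_sub, map_mul, map_one, map_pow, Complex.conj_ofReal,
      Complex.conj_conj, hKc]
    ring
  have hEne : ∀ t ∈ Set.Ioo a b, E t ≠ 0 := fun t ht => hE t ▸ hDne t ht
  set g : ℝ → ℂ × ℂ := fun t => ((P - Kc * (t:ℂ)) / E t, S / E t) with hgdef
  set F : ℝ → ℂ × ℂ := fun t => (ρ t, σ t) with hFdef
  set v : ℂ × ℂ → ℂ × ℂ := fun p => (p.1^2 + p.2 * conj p.2, (p.1 + conj p.1) * p.2) with hvdef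
  have hEderiv : ∀ t : ℝ, HasDerivAt E (-(P + conj P) + 2 * Kc * (t:ℂ)) t := by
    intro t
    have h : HasDerivAt (fun z : ℂ => 1 - (P + conj P) * z + Kc * z^2)
        (-(P + conj P) + 2 * Kc * (t:ℂ)) (t:ℂ) := by
      have h1 : HasDerivAt (fun z : ℂ => (P + conj P) * z) (P + conj P) (t:ℂ) := by
        simpa using (hasDerivAt_id (t:ℂ)).const_mul (P + conj P)
      have h2 : HasDerivAt (fun z : ℂ => Kc * z^2) (Kc * (2 * (t:ℂ))) (t:ℂ) := by
        simpa using (hasDerivAt_pow 2 (t:ℂ)).const_mul Kc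
      have := ((hasDerivAt_const (t:ℂ) (1:ℂ)).sub h1).add h2
      exact this.congr_deriv (by ring)
    exact h.comp_ofReal
  have hgderiv : ∀ t ∈ Set.Ioo a b, HasDerivAt g (v (g t)) t := by
    intro t ht
    have hne := hEne t ht
    have hnum1 : HasDerivAt (fun u : ℝ => P - Kc * (u:ℂ)) (-Kc) t := by
      have h : HasDerivAt (fun z : ℂ => P - Kc * z) (0 - Kc * 1) (t:ℂ) :=
        (hasDerivAt_const (t:ℂ) P).sub ((hasDerivAt_id (t:ℂ)).const_mul Kc)
      simpa using h.comp_ofReal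
    have h1 : HasDerivAt (fun u : ℝ => (P - Kc * (u:ℂ)) / E u)
        ((-Kc * E t - (P - Kc * (t:ℂ)) * (-(P + conj P) + 2 * Kc * (t:ℂ))) / (E t)^2) t :=
      hnum1.div (hEderiv t) hne
    have h2 : HasDerivAt (fun u : ℝ => S / E u)
        ((0 * E t - S * (-(P + conj P) + 2 * Kc * (t:ℂ))) / (E t)^2) t :=
      (hasDerivAt_const t S).div (hEderiv t) hne
    have hpair := h1.prodMk h2
    have hgF : g = fun u : ℝ => ((P - Kc * (u:ℂ)) / E u, S / E u) := hgdef
    rw [hgF]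
    convert hpair using 1
    have hx : conj ((P - Kc*(t:ℂ))/E t) = (conj P - Kc*(t:ℂ))/E t := by
      rw [map_div₀, hEconj, map_sub, map_mul, hKconj, Complex.conj_ofReal]
    have hy : conj (S/E t) = conj S/E t := by rw [map_div₀, hEconj]
    simp only [hvdef, hgdef]
    rw [Prod.mk.injEq]
    constructor
    · rw [hy]
      field_simp
      simp only [hEdef, hKc]
      ring
    · rw [hx]
      field_simp
      simp only [hEdef, hKc]
      ring
  intro r hr
  -- choose a compact subinterval
  set a' : ℝ := (a + min r 0)/2 with ha'
  set b' : ℝ := (max r 0 + b)/2 with hb'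
  have hmin : a < min r 0 := lt_min hr.1 ha
  have hmax : max r 0 < b := max_lt hr.2 hb
  have haa : a < a' := by rw [ha']; linarith
  have ha'm : a' < min r 0 := by rw [ha']; linarith
  have hbb : b' < b := by rw [hb']; linarith
  have hb'm : max r 0 < b' := by rw [hb']; linarith
  have hsub : Set.Ioo a' b' ⊆ Set.Ioo a b := Set.Ioo_subset_Ioo haa.le hbb.le
  have hsub' : Set.Icc a' b' ⊆ Set.Ioo a b :=
    fun x hx => ⟨lt_of_lt_of_le haa hx.1, lt_of_le_of_lt hx.2 hbb⟩
  have h0mem : (0:ℝ) ∈ Set.Ioo a' b' :=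
    ⟨lt_of_lt_of_le ha'm (min_le_right _ _), lt_of_le_of_lt (le_max_right _ _) hb'm⟩
  have hrmem : r ∈ Set.Ioo a' b' :=
    ⟨lt_of_lt_of_le ha'm (min_le_left _ _), lt_of_le_of_lt (le_max_left _ _) hb'm⟩
  -- continuity and bound
  have hFcont : ContinuousOn F (Set.Icc a' b') :=
    continuousOn_of_forall_continuousAt fun t ht =>
      ((hρ t (hsub' ht)).continuousAt.prodMk (hσ t (hsub' ht)).continuousAt)
  have hgcont : ContinuousOn g (Set.Icc a' b') :=
    continuousOn_of_forall_continuousAt fun t ht => (hgderiv t (hsub' ht)).continuousAt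
  obtain ⟨C, hC⟩ := isCompact_Icc.exists_bound_of_continuousOn (hFcont.prodMk hgcont)
  set R := max C 0 with hRdef
  have hR : 0 ≤ R := le_max_right _ _
  have hFmem : ∀ t ∈ Set.Ioo a' b', F t ∈ Metric.closedBall (0 : ℂ × ℂ) R := by
    intro t ht
    rw [Metric.mem_closedBall, dist_zero_right]
    exact le_trans (le_trans (norm_fst_le ((F t, g t))) (hC t (Set.Ioo_subset_Icc_self ht)))
      (le_max_left _ _)
  have hgmem : ∀ t ∈ Set.Ioo a' b', g t ∈ Metric.closedBall (0 : ℂ × ℂ) R := by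
    intro t ht
    rw [Metric.mem_closedBall, dist_zero_right]
    exact le_trans (le_trans (norm_snd_le ((F t, g t))) (hC t (Set.Ioo_subset_Icc_self ht)))
      (le_max_left _ _)
  have heq0 : F 0 = g 0 := by
    have hE0 : E 0 = 1 := by simp [hEdef]
    simp only [hFdef, hgdef, hE0, Complex.ofReal_zero, mul_zero, sub_zero, div_one]
    rfl
  have huniq : Set.EqOn F g (Set.Ioo a' b') := by
    refine ODE_solution_unique_of_mem_Ioo (v := fun _ => v)
      (s := fun _ => Metric.closedBall (0 : ℂ × ℂ) R) (K := (4*R).toNNReal)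
      (fun _ _ => sachs_lip R hR) h0mem ?_ ?_ heq0
    · intro t ht
      refine ⟨?_, hFmem t ht⟩
      have := (hρ t (hsub ht)).prodMk (hσ t (hsub ht))
      convert this using 1
    · exact fun t ht => ⟨hgderiv t (hsub ht), hgmem t ht⟩
  have hFr := huniq hrmem
  rw [hE r]
  constructor
  · exact congrArg Prod.fst hFr
  · exact congrArg Prod.snd hFr
end

section
/- Equivalence of the two formulas for the reflected perpendicular coordinate: let ξ₀, ξ₁, η₀, η₁ ∈ ℂ and r₀ ∈ ℝ, with Δ := (1 − ξ₀·conj(ξ₀))·conj(ξ₁) − 2·conj(ξ₀) ≠ 0. Suppose the intersection equation holds: η₁ = ((1 + conj(ξ₀)ξ₁)²·η₀ − (ξ₀ − ξ₁)²·conj(η₀)) / (1 + ξ₀·conj(ξ₀))² + (ξ₀ − ξ₁)(1 + conj(ξ₀)ξ₁)·r₀ / (1 + ξ₀·conj(ξ₀)). Then ((conj(ξ₀) − conj(ξ₁))²·η₀ − (1 + ξ₀·conj(ξ₁))²·conj(η₀) + (conj(ξ₀) − conj(ξ₁))(1 + ξ₀·conj(ξ₁))(1 + ξ₀·conj(ξ₀))·r₀)/Δ²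 = (−(1 + ξ₀·conj(ξ₀))²·conj(η₁) + 2(conj(ξ₀) − conj(ξ₁))(1 + ξ₀·conj(ξ₁))(1 + ξ₀·conj(ξ₀))·r₀)/Δ². -/
open Complex ComplexConjugate

/-- Equivalence of the two formulas for the reflected perpendicular coordinate, under
the intersection equation. -/
theorem reflected_eta_formulas (ξ₀ ξ₁ η₀ η₁ Δ : ℂ) (r₀ : ℝ)
    (hΔdef : Δ = (1 - ξ₀ * conj ξ₀) * conj ξ₁ - 2 * conj ξ₀) (hΔ : Δ ≠ 0)
    (hint : η₁ = ((1 + conj ξ₀ * ξ₁) ^ 2 * η₀ - (ξ₀ - ξ₁) ^ 2 * conj η₀) /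
        (1 + ξ₀ * conj ξ₀) ^ 2
      + (ξ₀ - ξ₁) * (1 + conj ξ₀ * ξ₁) * (r₀ : ℂ) / (1 + ξ₀ * conj ξ₀)) :
    ((conj ξ₀ - conj ξ₁) ^ 2 * η₀ - (1 + ξ₀ * conj ξ₁) ^ 2 * conj η₀
        + (conj ξ₀ - conj ξ₁) * (1 + ξ₀ * conj ξ₁) * (1 + ξ₀ * conj ξ₀) * (r₀ : ℂ)) / Δ ^ 2
      = (-(1 + ξ₀ * conj ξ₀) ^ 2 * conj η₁
        + 2 * (conj ξ₀ - conj ξ₁) * (1 + ξ₀ * conj ξ₁) * (1 + ξ₀ * conj ξ₀) * (r₀ : ℂ)) /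
          Δ ^ 2 := by
  have ha : (1 : ℂ) + ξ₀ * conj ξ₀ ≠ 0 := by
    rw [Complex.mul_conj]
    intro h
    have h' := congrArg Complex.re h
    simp at h'
    nlinarith [Complex.normSq_nonneg ξ₀]
  have ha' : (1 : ℂ) + conj ξ₀ * ξ₀ ≠ 0 := by rwa [mul_comm]
  have h2 := congrArg conj hint
  simp only [map_add, map_div₀, map_sub, map_mul, map_pow, map_one, Complex.conj_conj,
    Complex.conj_ofReal] at h2
  rw [h2]
  field_simp [ha, ha', hΔ]
  ring
end

section
/- Intersection equation: for all ξ₀, ξ₁, η₀ ∈ ℂ and r₀ ∈ ℝ, write (z,t) = Φ(ξ₀,η₀,r₀). Then (1/2)(z − 2tξ₁ − conj(z)·ξ₁²) = ((1 + conj(ξ₀)ξ₁)²·η₀ − (ξ₀ − ξ₁)²·conj(η₀)) / (1 + ξ₀·conj(ξ₀))² + (ξ₀ − ξ₁)(1 + conj(ξ₀)ξ₁)·r₀ / (1 + ξ₀·conj(ξ₀)). Consequently an oriented line with direction coordinate ξ₁ passes through the point Φ(ξ₀,η₀,r₀) if and only if its perpendicular coordinate η₁ equals the right-hand side. -/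
open Complex ComplexConjugate

/-- The map `Φ` sending an oriented line with coordinates `(ξ, η)` and affine
parameter `r` to the corresponding point of `ℝ³ ≃ ℂ × ℝ`. -/
noncomputable def Phi (ξ η : ℂ) (r : ℝ) : ℂ × ℝ :=
  ((2 * (η - conj η * ξ ^ 2) + 2 * ξ * (1 + ξ * conj ξ) * (r : ℂ)) / (1 + ξ * conj ξ) ^ 2,
   (((-2) * (η * conj ξ + conj η * ξ) + (1 - ξ ^ 2 * (conj ξ) ^ 2) * (r : ℂ)) /
      (1 + ξ * conj ξ) ^ 2).re)

/-- The direction map: the unit vector in `ℝ³ ≃ ℂ × ℝ` with stereographic coordinate `ξ`. -/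
noncomputable def dmap (ξ : ℂ) : ℂ × ℝ :=
  (2 * ξ / ((1 : ℂ) + (Complex.normSq ξ : ℂ)),
   (1 - Complex.normSq ξ) / (1 + Complex.normSq ξ))

/-- The Euclidean inner product on `ℝ³ ≃ ℂ × ℝ`. -/
noncomputable def inner3 (p q : ℂ × ℝ) : ℝ := (p.1 * conj q.1).re + p.2 * q.2

lemma hden (ξ : ℂ) : (1 : ℂ) + ξ * conj ξ ≠ 0 := by
  rw [Complex.mul_conj]
  have : (0:ℝ) < 1 + Complex.normSq ξ := by linarith [Complex.normSq_nonneg ξ]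
  exact_mod_cast this.ne'

lemma hre (X : ℂ) : ((X.re : ℝ) : ℂ) = (X + conj X) / 2 := by
  rw [Complex.add_conj]; push_cast; ring

set_option maxHeartbeats 1000000 in
lemma key (ξ₀ ξ₁ η₀ : ℂ) (r₀ : ℝ) :
    (1 / 2) * ((Phi ξ₀ η₀ r₀).1 - 2 * (((Phi ξ₀ η₀ r₀).2 : ℝ) : ℂ) * ξ₁
        - conj (Phi ξ₀ η₀ r₀).1 * ξ₁ ^ 2)
      = ((1 + conj ξ₀ * ξ₁) ^ 2 * η₀ - (ξ₀ - ξ₁) ^ 2 * conj η₀) / (1 + ξ₀ * conj ξ₀) ^ 2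
        + (ξ₀ - ξ₁) * (1 + conj ξ₀ * ξ₁) * (r₀ : ℂ) / (1 + ξ₀ * conj ξ₀) := by
  have h := hden ξ₀
  simp only [Phi, hre]
  simp only [map_div₀, map_add, map_mul, map_sub, map_pow, map_one, map_neg, map_ofNat,
    Complex.conj_conj, Complex.conj_ofReal]
  generalize conj ξ₀ = b at *
  generalize conj η₀ = f
  simp only [mul_comm b ξ₀]
  have he : (1 + ξ₀ * b) * (1 + ξ₀ * b)⁻¹ = 1 := mul_inv_cancel₀ h
  simp only [div_eq_mul_inv, ← inv_pow]
  generalize (1 + ξ₀ * b)⁻¹ = e at he ⊢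
  linear_combination ((ξ₀ - ξ₁) * (1 + b * ξ₁) * (r₀ : ℂ) * e) * he

lemma rC (ξ z : ℂ) (t : ℝ) : ((inner3 (z, t) (dmap ξ) : ℝ) : ℂ)
    = ((z * conj ξ + conj z * ξ) + (t:ℂ) * (1 - ξ * conj ξ)) / (1 + ξ * conj ξ) := by
  have h : ((1:ℝ) + Complex.normSq ξ) ≠ 0 := by
    have := Complex.normSq_nonneg ξ; intro hc; linarith
  simp only [inner3, dmap]
  push_cast
  rw [hre]
  simp only [map_div₀, map_add, map_mul, map_one, Complex.conj_conj, Complex.conj_ofReal,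
    map_ofNat]
  rw [← Complex.mul_conj]
  have h2 : (1:ℂ) + ξ * conj ξ ≠ 0 := by rw [Complex.mul_conj]; exact_mod_cast h
  field_simp

set_option maxHeartbeats 1000000 in
lemma recon (ξ z : ℂ) (t : ℝ) :
    Phi ξ ((1/2) * (z - 2 * (t:ℂ) * ξ - conj z * ξ ^ 2)) (inner3 (z, t) (dmap ξ)) = (z, t) := by
  have h := hden ξ
  have hX : ((-2) * (((1/2) * (z - 2 * (t:ℂ) * ξ - conj z * ξ ^ 2)) * conj ξ
        + conj ((1/2) * (z - 2 * (t:ℂ) * ξ - conj z * ξ ^ 2)) * ξ)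
      + (1 - ξ ^ 2 * (conj ξ) ^ 2) * ((inner3 (z, t) (dmap ξ) : ℝ) : ℂ)) / (1 + ξ * conj ξ) ^ 2
      = (t : ℂ) := by
    rw [rC]
    simp only [map_div₀, map_add, map_mul, map_sub, map_pow, map_one, map_neg, map_ofNat,
      Complex.conj_conj, Complex.conj_ofReal]
    generalize conj ξ = b at *
    generalize conj z = w
    try simp only [mul_comm b ξ]
    have he : (1 + ξ * b) * (1 + ξ * b)⁻¹ = 1 := mul_inv_cancel₀ h
    simp only [div_eq_mul_inv, ← inv_pow]
    generalize (1 + ξ * b)⁻¹ = e at he ⊢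
    linear_combination (((1 + ξ * b) ^ 2 * (t:ℂ) - (-((z:ℂ)*b) - w*ξ + 4*(t:ℂ)*ξ*b + w*ξ^2*b + z*b^2*ξ)) * e ^ 2 + (1 + ξ * b) * (t:ℂ) * e + (t:ℂ)) * he
  refine Prod.ext ?_ ?_
  · show _ = z
    simp only [Phi, rC]
    simp only [map_div₀, map_add, map_mul, map_sub, map_pow, map_one, map_neg, map_ofNat,
      Complex.conj_conj, Complex.conj_ofReal]
    generalize conj ξ = b at *
    generalize conj z = w
    try simp only [mul_comm b ξ]
    have he : (1 + ξ * b) * (1 + ξ * b)⁻¹ = 1 := mul_inv_cancel₀ h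
    simp only [div_eq_mul_inv, ← inv_pow]
    generalize (1 + ξ * b)⁻¹ = e at he ⊢
    linear_combination (((1 + ξ * b) ^ 2 * z - (z - 2*(t:ℂ)*ξ - 2*w*ξ^2 + 2*(t:ℂ)*b*ξ^2 + z*b^2*ξ^2)) * e ^ 2 + (1 + ξ * b) * z * e + z) * he
  · show (_ : ℂ×ℝ).2 = t
    simp only [Phi]
    rw [show ((-2) * ((1/2 * (z - 2 * (t:ℂ) * ξ - conj z * ξ ^ 2)) * conj ξ
        + conj (1/2 * (z - 2 * (t:ℂ) * ξ - conj z * ξ ^ 2)) * ξ)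
      + (1 - ξ ^ 2 * (conj ξ) ^ 2) * ((inner3 (z, t) (dmap ξ) : ℝ) : ℂ)) / (1 + ξ * conj ξ) ^ 2
      = (t:ℂ) from hX]
    exact Complex.ofReal_re t

/-- Intersection equation: with `(z,t) = Φ(ξ₀,η₀,r₀)`, the perpendicular coordinate
`½(z − 2tξ₁ − conj z · ξ₁²)` of the line with direction `ξ₁` through `(z,t)` equals the
stated expression; consequently an oriented line `(ξ₁,η₁)` passes through `Φ(ξ₀,η₀,r₀)`
iff `η₁` equals that expression. -/
theorem intersection_equation (ξ₀ ξ₁ η₀ : ℂ) (r₀ : ℝ) :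
    (1 / 2) * ((Phi ξ₀ η₀ r₀).1 - 2 * (((Phi ξ₀ η₀ r₀).2 : ℝ) : ℂ) * ξ₁
        - conj (Phi ξ₀ η₀ r₀).1 * ξ₁ ^ 2)
      = ((1 + conj ξ₀ * ξ₁) ^ 2 * η₀ - (ξ₀ - ξ₁) ^ 2 * conj η₀) / (1 + ξ₀ * conj ξ₀) ^ 2
        + (ξ₀ - ξ₁) * (1 + conj ξ₀ * ξ₁) * (r₀ : ℂ) / (1 + ξ₀ * conj ξ₀) ∧
    ∀ η₁ : ℂ,
      ((∃ r₁ : ℝ, Phi ξ₁ η₁ r₁ = Phi ξ₀ η₀ r₀) ↔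
        η₁ = ((1 + conj ξ₀ * ξ₁) ^ 2 * η₀ - (ξ₀ - ξ₁) ^ 2 * conj η₀) /
            (1 + ξ₀ * conj ξ₀) ^ 2
          + (ξ₀ - ξ₁) * (1 + conj ξ₀ * ξ₁) * (r₀ : ℂ) / (1 + ξ₀ * conj ξ₀)) := by
  have hk := key ξ₀ ξ₁ η₀ r₀
  refine ⟨hk, fun η₁ => ⟨?_, ?_⟩⟩
  · rintro ⟨r₁, hr⟩
    have h1 := key ξ₁ ξ₁ η₁ r₁
    rw [hr] at h1
    have h2 : ((1 + conj ξ₁ * ξ₁) ^ 2 * η₁ - (ξ₁ - ξ₁) ^ 2 * conj η₁) / (1 + ξ₁ * conj ξ₁) ^ 2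
        + (ξ₁ - ξ₁) * (1 + conj ξ₁ * ξ₁) * (r₁ : ℂ) / (1 + ξ₁ * conj ξ₁) = η₁ := by
      have h := hden ξ₁
      rw [mul_comm (conj ξ₁) ξ₁, sub_self]
      field_simp
      ring
    rw [h2] at h1
    rw [← h1, hk]
  · intro hη
    refine ⟨inner3 (Phi ξ₀ η₀ r₀) (dmap ξ₁), ?_⟩
    have hrec := recon ξ₁ (Phi ξ₀ η₀ r₀).1 (Phi ξ₀ η₀ r₀).2
    rw [hk, ← hη] at hrec
    simpa only [Prod.mk.eta] using hrec
end

section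
/- The reflected line passes through the point of incidence: let ξ₀, ξ₁, η₀, η₁ ∈ ℂ and r₀ ∈ ℝ with Δ := (1 − ξ₀·conj(ξ₀))·conj(ξ₁) − 2·conj(ξ₀) ≠ 0, and suppose the intersection equation η₁ = ((1 + conj(ξ₀)ξ₁)²·η₀ − (ξ₀ − ξ₁)²·conj(η₀))/(1 + ξ₀·conj(ξ₀))² + (ξ₀ − ξ₁)(1 + conj(ξ₀)ξ₁)·r₀/(1 + ξ₀·conj(ξ₀)) holds. Define the reflected line by ξ = (2ξ₀·conj(ξ₁) + 1 − ξ₀·conj(ξ₀))/Δ and η = (−(1 + ξ₀·conj(ξ₀))²·conj(η₁) + 2(conj(ξ₀) − conj(ξ₁))(1 + ξ₀·conj(ξ₁))(1 + ξ₀·conj(ξ₀))·r₀)/Δ². Then there exists r ∈ ℝ with Φ(ξ,η,r) = Φ(ξ₀,η₀,r₀). -/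
open Complex ComplexConjugate

set_option maxHeartbeats 10000000

private lemma key_alg (S T Z CZ W E CE ρ : ℂ) (h : (1:ℂ) + S*T ≠ 0)
    (hE : E = (Z - 2*W*S - CZ*S^2)/2)
    (hCE : CE = (CZ - 2*W*T - Z*T^2)/2)
    (hρ : ρ = (Z*T + CZ*S + (1-S*T)*W)/(1+S*T)) :
    (2 * (E - CE * S ^ 2) + 2 * S * (1 + S * T) * ρ) / (1 + S * T) ^ 2 = Z ∧
    ((-2) * (E * T + CE * S) + (1 - S ^ 2 * T ^ 2) * ρ) / (1 + S * T) ^ 2 = W := by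
  subst hE hCE hρ
  constructor <;> (field_simp; ring)

/-- The reflected line passes through the point of incidence: under the intersection
equation, the reflected line `(ξ,η)` contains the point `Φ(ξ₀,η₀,r₀)`. -/
theorem reflected_line_through_incidence (ξ₀ ξ₁ η₀ η₁ Δ ξ η : ℂ) (r₀ : ℝ)
    (hΔdef : Δ = (1 - ξ₀ * conj ξ₀) * conj ξ₁ - 2 * conj ξ₀) (hΔ : Δ ≠ 0)
    (hint : η₁ = ((1 + conj ξ₀ * ξ₁) ^ 2 * η₀ - (ξ₀ - ξ₁) ^ 2 * conj η₀) /
        (1 + ξ₀ * conj ξ₀) ^ 2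
      + (ξ₀ - ξ₁) * (1 + conj ξ₀ * ξ₁) * (r₀ : ℂ) / (1 + ξ₀ * conj ξ₀))
    (hξ : ξ = (2 * ξ₀ * conj ξ₁ + 1 - ξ₀ * conj ξ₀) / Δ)
    (hη : η = (-(1 + ξ₀ * conj ξ₀) ^ 2 * conj η₁
      + 2 * (conj ξ₀ - conj ξ₁) * (1 + ξ₀ * conj ξ₁) * (1 + ξ₀ * conj ξ₀) * (r₀ : ℂ)) /
        Δ ^ 2) :
    ∃ r : ℝ, Phi ξ η r = Phi ξ₀ η₀ r₀ := by
  have h0 : (1:ℂ) + ξ₀ * conj ξ₀ ≠ 0 := by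
    rw [Complex.mul_conj]
    exact_mod_cast (by nlinarith [Complex.normSq_nonneg ξ₀] :
      (1:ℝ) + Complex.normSq ξ₀ ≠ 0)
  have hd : (1:ℂ) + ξ * conj ξ ≠ 0 := by
    rw [Complex.mul_conj]
    exact_mod_cast (by nlinarith [Complex.normSq_nonneg ξ] :
      (1:ℝ) + Complex.normSq ξ ≠ 0)
  have hcΔ : conj Δ ≠ 0 := by rw [starRingEnd_apply]; exact star_ne_zero.mpr hΔ
  have hΔ' : (1 - ξ₀ * conj ξ₀) * conj ξ₁ - 2 * conj ξ₀ ≠ 0 := hΔdef ▸ hΔ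
  have hcΔdef : conj Δ = (1 - ξ₀ * conj ξ₀) * ξ₁ - 2 * ξ₀ := by
    rw [hΔdef]
    simp only [map_sub, map_mul, map_one, map_ofNat, Complex.conj_conj]
    ring
  have hcΔ' : (1 - ξ₀ * conj ξ₀) * ξ₁ - 2 * ξ₀ ≠ 0 := hcΔdef ▸ hcΔ
  have hcξ : conj ξ = (2 * conj ξ₀ * ξ₁ + 1 - ξ₀ * conj ξ₀) / conj Δ := by
    rw [hξ]
    simp only [map_div₀, map_add, map_sub, map_mul, map_one, map_ofNat, Complex.conj_conj]
    ring
  have hcη₁ : conj η₁ = ((1 + ξ₀ * conj ξ₁) ^ 2 * conj η₀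
      - (conj ξ₀ - conj ξ₁) ^ 2 * η₀) / (1 + ξ₀ * conj ξ₀) ^ 2
      + (conj ξ₀ - conj ξ₁) * (1 + ξ₀ * conj ξ₁) * (r₀ : ℂ) / (1 + ξ₀ * conj ξ₀) := by
    rw [hint]
    simp only [map_add, map_div₀, map_sub, map_mul, map_pow, map_one, map_ofNat,
      Complex.conj_conj, Complex.conj_ofReal]
    ring
  have hcη : conj η = (-(1 + ξ₀ * conj ξ₀) ^ 2 * η₁
      + 2 * (ξ₀ - ξ₁) * (1 + conj ξ₀ * ξ₁) * (1 + ξ₀ * conj ξ₀) * (r₀ : ℂ)) /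
        (conj Δ) ^ 2 := by
    rw [hη]
    simp only [map_div₀, map_add, map_sub, map_mul, map_pow, map_one, map_neg, map_ofNat,
      Complex.conj_conj, Complex.conj_ofReal]
    ring
  set z := (2 * (η₀ - conj η₀ * ξ₀ ^ 2) + 2 * ξ₀ * (1 + ξ₀ * conj ξ₀) * (r₀ : ℂ)) /
      (1 + ξ₀ * conj ξ₀) ^ 2 with hz
  set τ := ((-2) * (η₀ * conj ξ₀ + conj η₀ * ξ₀) + (1 - ξ₀ ^ 2 * (conj ξ₀) ^ 2) * (r₀ : ℂ)) /
      (1 + ξ₀ * conj ξ₀) ^ 2 with hτ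
  have hcz : conj z = (2 * (conj η₀ - η₀ * (conj ξ₀) ^ 2)
      + 2 * conj ξ₀ * (1 + ξ₀ * conj ξ₀) * (r₀ : ℂ)) / (1 + ξ₀ * conj ξ₀) ^ 2 := by
    rw [hz]
    simp only [map_div₀, map_add, map_sub, map_mul, map_pow, map_one, map_ofNat,
      Complex.conj_conj, Complex.conj_ofReal]
    ring
  have hcτ : conj τ = τ := by
    rw [hτ]
    simp only [map_div₀, map_add, map_sub, map_mul, map_pow, map_one, map_neg, map_ofNat,
      Complex.conj_conj, Complex.conj_ofReal]
    ring
  set ρ := (z * conj ξ + conj z * ξ + (1 - ξ * conj ξ) * τ) / (1 + ξ * conj ξ) with hρ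
  have hρc : conj ρ = ρ := by
    rw [hρ]
    simp only [map_div₀, map_add, map_sub, map_mul, map_one, Complex.conj_conj, hcτ]
    ring
  have hρre : ((ρ.re : ℝ) : ℂ) = ρ := Complex.conj_eq_iff_re.mp hρc
  have hE : η = (z - 2 * τ * ξ - conj z * ξ ^ 2) / 2 := by
    rw [hη, hcη₁, hcz, hξ, hz, hτ, hΔdef]
    field_simp [h0, hΔ']
    have hΔ'' : conj ξ₁ * (1 - ξ₀ * conj ξ₀) - conj ξ₀ * 2 ≠ 0 := by
      intro h; apply hΔ'; linear_combination h
    field_simp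
    ring
  have hCE : conj η = (conj z - 2 * τ * conj ξ - z * (conj ξ) ^ 2) / 2 := by
    rw [hcη, hint, hcz, hcξ, hz, hτ, hcΔdef]
    field_simp [h0, hcΔ']
    have hcΔ'' : ξ₁ * (1 - ξ₀ * conj ξ₀) - ξ₀ * 2 ≠ 0 := by
      intro h; apply hcΔ'; linear_combination h
    field_simp
    ring
  obtain ⟨hI, hII⟩ := key_alg ξ (conj ξ) z (conj z) τ η (conj η) ρ hd hE hCE
    hρ
  refine ⟨ρ.re, ?_⟩
  rw [hz] at hI
  rw [hτ] at hII
  simp only [Phi]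
  refine Prod.ext ?_ ?_
  · rw [hρre]; exact hI
  · rw [hρre]; exact congrArg Complex.re hII
end

section
/- Solution of the intersection equation for a point source: let z₀ ∈ ℂ with z₀ ≠ 0 and v ∈ ℝ. Set R = √(v² + z₀·conj(z₀)) and ξ₁ = (R − v)/conj(z₀). Then Φ(ξ₁, 0, R) = (z₀, v); that is, the oriented line from the origin with direction coordinate ξ₁ reaches the point (z₀, v) at affine parameter R, the distance from the origin to (z₀,v). -/
open Complex ComplexConjugate

/-- Solution of the intersection equation for a point source: with
`R = √(v² + z₀·conj z₀)` and `ξ₁ = (R − v)/conj z₀`, the oriented line from the origin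
with direction coordinate `ξ₁` reaches the point `(z₀, v)` at affine parameter `R`. -/
theorem point_source_intersection (z₀ : ℂ) (hz₀ : z₀ ≠ 0) (v : ℝ)
    (R : ℝ) (hR : R = Real.sqrt (v ^ 2 + Complex.normSq z₀))
    (ξ₁ : ℂ) (hξ₁ : ξ₁ = (((R - v : ℝ) : ℂ)) / conj z₀) :
    Phi ξ₁ 0 R = (z₀, v) := by
  have hns : 0 < Complex.normSq z₀ := Complex.normSq_pos.mpr hz₀
  have hRsq : R ^ 2 = v ^ 2 + Complex.normSq z₀ := by
    rw [hR]; exact Real.sq_sqrt (by positivity)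
  have hR0 : 0 < R := by rw [hR]; exact Real.sqrt_pos.mpr (by positivity)
  have hsv : v < R := by nlinarith
  have hvR : 0 < R + v := by nlinarith
  have hRv : ((R + v : ℝ) : ℂ) ≠ 0 := by exact_mod_cast ne_of_gt hvR
  have hc : (conj z₀ : ℂ) ≠ 0 := by simpa using hz₀
  have hz : z₀ * conj z₀ = ((R ^ 2 - v ^ 2 : ℝ) : ℂ) := by
    rw [Complex.mul_conj]; norm_cast; linarith
  have hq : ((R ^ 2 - v ^ 2 : ℝ) : ℂ) ≠ 0 := by
    norm_cast; nlinarith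
  have hq' : ((R:ℂ) ^ 2 - (v:ℂ) ^ 2) ≠ 0 := by push_cast at hq; exact hq
  have hRv' : ((R:ℂ) + v) ≠ 0 := by push_cast at hRv; exact hRv
  have hc2 : conj z₀ = ((R ^ 2 - v ^ 2 : ℝ) : ℂ) / z₀ := by
    rw [eq_div_iff hz₀]; linear_combination hz
  have hcx : conj ξ₁ = ((R - v : ℝ) : ℂ) / z₀ := by
    rw [hξ₁]; simp [map_div₀]
  have hd : 1 + ξ₁ * conj ξ₁ = ((2 * R / (R + v) : ℝ) : ℂ) := by
    rw [hcx, hξ₁, div_mul_div_comm, mul_comm (conj z₀) z₀, hz]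
    push_cast
    field_simp [hq', hRv']
    ring
  have hd0 : (1 + ξ₁ * conj ξ₁) ≠ 0 := by
    rw [hd]
    have h2 : (0:ℝ) < 2 * R / (R + v) := by positivity
    exact_mod_cast ne_of_gt h2
  have hz1 : (2 * ((0:ℂ) - conj 0 * ξ₁ ^ 2) + 2 * ξ₁ * (1 + ξ₁ * conj ξ₁) * (R:ℂ)) /
      (1 + ξ₁ * conj ξ₁) ^ 2 = z₀ := by
    rw [div_eq_iff (pow_ne_zero 2 hd0), hd, hξ₁, hc2]
    push_cast
    field_simp
    simp only [map_zero]
    ring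
  have hz2 : (((-2) * ((0:ℂ) * conj ξ₁ + conj 0 * ξ₁) + (1 - ξ₁ ^ 2 * (conj ξ₁) ^ 2) * (R:ℂ)) /
      (1 + ξ₁ * conj ξ₁) ^ 2) = (v : ℂ) := by
    rw [div_eq_iff (pow_ne_zero 2 hd0), hd, hcx, hξ₁, hc2]
    push_cast
    field_simp
    simp only [map_zero]
    ring
  show Phi ξ₁ 0 R = (z₀, v)
  rw [Phi, Prod.mk.injEq]
  exact ⟨hz1, by rw [hz2, Complex.ofReal_re]⟩
end
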